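/- Let f : ℝ^d → ℝ be ρ-weakly convex, lsc, bounded below, with 0 < λ < 1/ρ. Let x^{k+1} = x^k - (β_k/‖g(x^k)‖) g(x^k) with g(x^k) ∈ ∂f(x^k) nonzero and β_k > 0. Then f_λ(x^{k+1}) ≤ f_λ(x^k) - ((1/λ - ρ) β_k / (λ ‖g(x^k)‖)) ‖x^k - prox_{λf}(x^k)‖² + β_k²/(2λ). -/

import Mathlib

open scoped InnerProductSpace BigOperators

lemma combo_norm_sq {E : Type*} [NormedAddCommGroup E] [InnerProductSpace ℝ E]
    (a b : E) (t : ℝ) :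
    ‖(1-t) • a + t • b‖ ^ 2 = (1-t) * ‖a‖ ^ 2 + t * ‖b‖ ^ 2 - t * (1-t) * ‖a - b‖ ^ 2 := by
  have h1 : ∀ v : E, ‖v‖ ^ 2 = ⟪v, v⟫_ℝ := fun v => (real_inner_self_eq_norm_sq v).symm
  rw [h1, h1, h1, h1]
  simp only [inner_add_add_self, inner_sub_sub_self, real_inner_smul_left,
    real_inner_smul_right, real_inner_comm a b]
  ring

/-- arithmetic: divide the combined prox/convexity inequality by `t`. -/
lemma div_step (F G FY N t lam ρ : ℝ) (hlam : 0 < lam) (ht0 : 0 < t)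
    (h1 : F + N / (2*lam) ≤ FY + (1-t)^2 * N / (2*lam))
    (h5 : FY ≤ (1-t) * F + t * G + ρ/2 * (t * (1-t) * N)) :
    F + N / (2*lam) + ((1/lam - ρ)/2) * (1-t) * N ≤ G := by
  have hl : (2*lam) ≠ 0 := by positivity
  have h6 : t * (F + N / (2*lam) + ((1/lam - ρ)/2) * (1-t) * N) ≤ t * G := by
    have e1 : t * (F + N / (2*lam) + ((1/lam - ρ)/2) * (1-t) * N) =
        t * F + N / (2*lam) - (1-t)^2 * N / (2*lam) - ρ/2 * (t * (1-t) * N) := by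
      field_simp; ring
    rw [e1]; linarith
  exact le_of_mul_le_mul_left h6 ht0

/-- arithmetic: take `t → 0` in the strong-convexity inequality. -/
lemma limit_step (F G N μ : ℝ) (hμ : 0 < μ) (hN : 0 ≤ N)
    (key : ∀ t : ℝ, 0 < t → t ≤ 1 → F + (μ/2) * (1-t) * N ≤ G) :
    F + (μ/2) * N ≤ G := by
  apply le_of_forall_pos_le_add
  intro ε hε
  rcases eq_or_lt_of_le hN with hN0 | hN0
  · have := key 1 one_pos le_rfl
    nlinarith
  · set t : ℝ := min 1 (ε / ((μ/2) * N)) with htdef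
    have htpos : 0 < t := lt_min one_pos (by positivity)
    have ht1 : t ≤ 1 := min_le_left _ _
    have hkey := key t htpos ht1
    have htle : t ≤ ε / ((μ/2) * N) := min_le_right _ _
    have h2 : t * ((μ/2) * N) ≤ ε := by
      rw [le_div_iff₀ (by positivity)] at htle; linarith
    nlinarith


set_option maxHeartbeats 1000000 in
/-- One-step descent of the Moreau envelope along the subgradient method (weakly convex case). -/
theorem moreau_one_step_descent
    (d : ℕ) (f : EuclideanSpace ℝ (Fin d) → ℝ) (ρ lam : ℝ)
    (hρ : 0 < ρ) (hlam : 0 < lam) (hlamρ : lam < 1 / ρ)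
    (hwc : ConvexOn ℝ Set.univ (fun x => f x + (ρ / 2) * ‖x‖ ^ 2))
    (hlsc : LowerSemicontinuous f)
    (hbdd : BddBelow (Set.range f))
    (flam : EuclideanSpace ℝ (Fin d) → ℝ)
    (p : EuclideanSpace ℝ (Fin d) → EuclideanSpace ℝ (Fin d))
    (hprox : ∀ x y, f (p x) + ‖p x - x‖ ^ 2 / (2 * lam) ≤ f y + ‖y - x‖ ^ 2 / (2 * lam))
    (hflam : ∀ x, flam x = f (p x) + ‖p x - x‖ ^ 2 / (2 * lam))
    (xk xk1 g : EuclideanSpace ℝ (Fin d)) (β : ℝ)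
    (hβ : 0 < β) (hg : g ≠ 0)
    (hsub : ∀ y, f xk + ⟪g, y - xk⟫_ℝ - (ρ / 2) * ‖xk - y‖ ^ 2 ≤ f y)
    (hupd : xk1 = xk - (β / ‖g‖) • g) :
    flam xk1 ≤ flam xk - ((1 / lam - ρ) * β / (lam * ‖g‖)) * ‖xk - p xk‖ ^ 2
      + β ^ 2 / (2 * lam) := by
  clear hlsc hbdd
  have hgn : (0:ℝ) < ‖g‖ := norm_pos_iff.mpr hg
  have hlamρ' : lam * ρ < 1 := (lt_div_iff₀ hρ).mp hlamρ
  have hμ : 0 < 1 / lam - ρ := by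
    have : ρ < 1 / lam := (lt_div_iff₀ hlam).mpr (by linarith)
    linarith
  set μ : ℝ := 1 / lam - ρ with hμdef
  clear_value μ
  set q : EuclideanSpace ℝ (Fin d) := p xk with hqdef
  clear_value q
  have hNrev : ‖xk - q‖ ^ 2 = ‖q - xk‖ ^ 2 := by rw [norm_sub_rev]
  -- key inequality for t ∈ (0,1]
  have key : ∀ t : ℝ, 0 < t → t ≤ 1 →
      (f q + ‖q - xk‖ ^ 2 / (2 * lam)) + (μ / 2) * (1 - t) * ‖q - xk‖ ^ 2 ≤ f xk := by
    intro t ht0 ht1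
    set yt : EuclideanSpace ℝ (Fin d) := (1 - t) • q + t • xk with hyt
    have h1 : f q + ‖q - xk‖ ^ 2 / (2 * lam) ≤ f yt + ‖yt - xk‖ ^ 2 / (2 * lam) := by
      rw [hqdef]; exact hprox xk yt
    have h2 : f yt + (ρ / 2) * ‖yt‖ ^ 2 ≤
        (1 - t) * (f q + (ρ / 2) * ‖q‖ ^ 2) + t * (f xk + (ρ / 2) * ‖xk‖ ^ 2) :=
      hwc.2 (Set.mem_univ q) (Set.mem_univ xk) (by linarith) ht0.le (by ring)
    have h3 : ‖yt‖ ^ 2 = (1 - t) * ‖q‖ ^ 2 + t * ‖xk‖ ^ 2 - t * (1 - t) * ‖q - xk‖ ^ 2 :=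
      combo_norm_sq q xk t
    have h4 : ‖yt - xk‖ ^ 2 = (1 - t) ^ 2 * ‖q - xk‖ ^ 2 := by
      have hd : yt - xk = (1 - t) • (q - xk) := by rw [hyt]; module
      rw [hd, norm_smul, Real.norm_eq_abs, mul_pow, sq_abs]
    have h5 : f yt ≤ (1 - t) * f q + t * f xk + ρ/2 * (t * (1 - t) * ‖q - xk‖ ^ 2) := by
      nlinarith [h2, h3]
    rw [h4] at h1
    have hds := div_step (f q) (f xk) (f yt) (‖q - xk‖ ^ 2) t lam ρ hlam ht0 h1 h5
    rw [← hμdef] at hds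
    linarith
  have hB : (f q + ‖q - xk‖ ^ 2 / (2 * lam)) + (μ / 2) * ‖q - xk‖ ^ 2 ≤ f xk :=
    limit_step _ _ _ _ hμ (by positivity) key
  -- subgradient bound
  have hC : ⟪g, q - xk⟫_ℝ ≤ -μ * ‖q - xk‖ ^ 2 := by
    have h1 := hsub q
    rw [hNrev] at h1
    have hid3 : μ * ‖q - xk‖ ^ 2 = ‖q - xk‖ ^ 2 / (2 * lam)
        + μ / 2 * ‖q - xk‖ ^ 2 - ρ / 2 * ‖q - xk‖ ^ 2 := by
      rw [hμdef]; field_simp; ring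
    linarith [hB, h1, hid3]
  -- final assembly
  set s : ℝ := β / ‖g‖ with hsdef
  clear_value s
  have hspos : 0 < s := by rw [hsdef]; positivity
  have hsg : s * ‖g‖ = β := by rw [hsdef]; exact div_mul_cancel₀ β hgn.ne'
  have hqxk1 : ‖q - xk1‖ ^ 2 = ‖q - xk‖ ^ 2 + 2 * (s * ⟪g, q - xk⟫_ℝ) + β ^ 2 := by
    have hd : q - xk1 = (q - xk) + s • g := by rw [hupd]; module
    rw [hd, norm_add_sq_real, real_inner_smul_right, norm_smul, Real.norm_eq_abs,
      mul_pow, sq_abs, real_inner_comm]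
    have hb : s ^ 2 * ‖g‖ ^ 2 = β ^ 2 := by rw [← mul_pow, hsg]
    rw [hb]
  have hstep : flam xk1 ≤ f q + ‖q - xk1‖ ^ 2 / (2 * lam) := by
    rw [hflam xk1]; exact hprox xk1 q
  have hflamxk : flam xk = f q + ‖q - xk‖ ^ 2 / (2 * lam) := by rw [hflam xk, ← hqdef]
  have hcoef : μ * β / (lam * ‖g‖) * ‖xk - q‖ ^ 2
      = μ * s * ‖q - xk‖ ^ 2 / lam := by
    rw [hNrev, hsdef]
    generalize ‖q - xk‖ ^ 2 = N
    field_simp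
  rw [hcoef, hflamxk]
  have hbound : ‖q - xk1‖ ^ 2 ≤ ‖q - xk‖ ^ 2 - 2 * s * μ * ‖q - xk‖ ^ 2 + β ^ 2 := by
    rw [hqxk1]
    nlinarith [hC, hspos]
  have h2lam : (0:ℝ) < 2 * lam := by linarith
  calc flam xk1 ≤ f q + ‖q - xk1‖ ^ 2 / (2 * lam) := hstep
    _ ≤ f q + (‖q - xk‖ ^ 2 - 2 * s * μ * ‖q - xk‖ ^ 2 + β ^ 2) / (2 * lam) :=
        add_le_add_right ((div_le_div_iff_of_pos_right h2lam).mpr hbound) _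
    _ = f q + ‖q - xk‖ ^ 2 / (2 * lam) - μ * s * ‖q - xk‖ ^ 2 / lam + β ^ 2 / (2 * lam) := by
        generalize f q = F
        generalize ‖q - xk‖ ^ 2 = N
        field_simp
        ring
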